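/- Let γ_{p,q} ∈ S_{p+q} be the permutation with the two cycles (1,…,p)(p+1,…,p+q), and let π ∈ S_{p+q} be a permutation satisfying |π| + |π⁻¹γ_{p,q}| = |γ_{p,q}| + 2, with k such that k and π(k) lie in different cycles of γ_{p,q}. Then the permutation γ̃ := γ_{p,q} ∘ (k, γ_{p,q}⁻¹π(k)) (composition with the transposition) has exactly one cycle and |π| + |π⁻¹γ̃| = |γ̃|. -/

import Mathlib

open Equiv Finset
open scoped Classical

noncomputable section

def numCycles {n : ℕ} (π : Equiv.Perm (Fin n)) : ℕ :=
  π.cycleType.card + (univ.filter fun x => π x = x).card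

def plen {n : ℕ} (π : Equiv.Perm (Fin n)) : ℕ := n - numCycles π

def gammaPQ (p q : ℕ) : Equiv.Perm (Fin (p + q)) :=
  finSumFinEquiv.permCongr (Equiv.sumCongr (finRotate p) (finRotate q))

def cycleLen {n : ℕ} (π : Equiv.Perm (Fin n)) (k : Fin n) : ℕ :=
  (univ.filter fun m => π.SameCycle k m).card

def Separates {n : ℕ} (σ : Equiv.Perm (Fin n)) (A : Finset (Fin n)) : Prop :=
  ∀ a ∈ A, ∀ b ∈ A, σ.SameCycle a b → a = b

def oddSet (n : ℕ) : Finset (Fin n) := univ.filter fun i => Odd (i.val + 1)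

def IsSNC (p q : ℕ) (π : Equiv.Perm (Fin (p + q))) : Prop :=
  (∃ i j, π.SameCycle i j ∧ ¬ (gammaPQ p q).SameCycle i j) ∧
    numCycles π + numCycles (gammaPQ p q * π⁻¹) = p + q

def SameParity {n : ℕ} (a b : Fin n) : Prop := (Odd (a.val + 1) ↔ Odd (b.val + 1))

def EvenCycles {n : ℕ} (π : Equiv.Perm (Fin n)) : Prop := ∀ k, Even (cycleLen π k)

def ParityReversing {n : ℕ} (π : Equiv.Perm (Fin n)) : Prop := ∀ k, ¬ SameParity k (π k)

def SNCminus (p q : ℕ) (π : Equiv.Perm (Fin (p + q))) : Prop :=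
  IsSNC p q π ∧ EvenCycles π ∧ ParityReversing π

end

noncomputable section Aux

variable {n : ℕ}

/-- The orbit of `x` under `σ`, as a finset. -/
def orb (σ : Equiv.Perm (Fin n)) (x : Fin n) : Finset (Fin n) :=
  univ.filter (fun y => σ.SameCycle x y)

lemma mem_orb {σ : Equiv.Perm (Fin n)} {x y : Fin n} : y ∈ orb σ x ↔ σ.SameCycle x y := by
  simp [orb]

lemma self_mem_orb (σ : Equiv.Perm (Fin n)) (x : Fin n) : x ∈ orb σ x :=
  mem_orb.2 (Equiv.Perm.SameCycle.refl _ _)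

lemma orb_eq_of_sameCycle {σ : Equiv.Perm (Fin n)} {x y : Fin n}
    (h : σ.SameCycle x y) : orb σ x = orb σ y := by
  ext z; simp only [mem_orb]
  exact ⟨fun hz => h.symm.trans hz, fun hz => h.trans hz⟩

lemma orb_fixed {σ : Equiv.Perm (Fin n)} {x : Fin n} (h : σ x = x) : orb σ x = {x} := by
  ext y
  simp only [mem_orb, mem_singleton]
  constructor
  · rintro ⟨i, rfl⟩
    exact Equiv.Perm.zpow_apply_eq_self_of_apply_eq_self h i
  · rintro rfl; exact Equiv.Perm.SameCycle.refl _ _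

lemma orb_of_mem_support {σ : Equiv.Perm (Fin n)} {x : Fin n} (h : σ x ≠ x) :
    orb σ x = (σ.cycleOf x).support := by
  ext y
  rw [mem_orb, Equiv.Perm.mem_support_cycleOf_iff]
  simp [Equiv.Perm.mem_support, h]

lemma numCycles_eq (σ : Equiv.Perm (Fin n)) :
    numCycles σ = (univ.image (orb σ)).card := by
  classical
  have hsplit : (univ : Finset (Fin n)) = σ.support ∪ σ.supportᶜ := by
    simp
  have himage : univ.image (orb σ) = σ.support.image (orb σ) ∪ σ.supportᶜ.image (orb σ) := by
    rw [hsplit, Finset.image_union]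
  have h1 : σ.support.image (orb σ) = σ.cycleFactorsFinset.image Equiv.Perm.support := by
    ext T
    simp only [Finset.mem_image]
    constructor
    · rintro ⟨x, hx, rfl⟩
      refine ⟨σ.cycleOf x, Equiv.Perm.cycleOf_mem_cycleFactorsFinset_iff.2 hx, ?_⟩
      rw [orb_of_mem_support (Equiv.Perm.mem_support.1 hx)]
    · rintro ⟨c, hc, rfl⟩
      obtain ⟨hcyc, hcf⟩ := Equiv.Perm.mem_cycleFactorsFinset_iff.1 hc
      obtain ⟨x, hx⟩ := hcyc.nonempty_support
      have hxσ : x ∈ σ.support := by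
        rw [Equiv.Perm.mem_support, ← hcf x hx]
        exact Equiv.Perm.mem_support.1 hx
      refine ⟨x, hxσ, ?_⟩
      rw [orb_of_mem_support (Equiv.Perm.mem_support.1 hxσ),
        ← Equiv.Perm.cycle_is_cycleOf hx hc]
  have h2 : σ.supportᶜ.image (orb σ) = σ.supportᶜ.image (fun x => ({x} : Finset (Fin n))) := by
    apply Finset.image_congr
    intro x hx
    rw [Finset.mem_coe, Finset.mem_compl, Equiv.Perm.notMem_support] at hx
    exact orb_fixed hx
  have hdisj : Disjoint (σ.support.image (orb σ)) (σ.supportᶜ.image (orb σ)) := by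
    rw [Finset.disjoint_left]
    rintro T hT hT'
    rw [h2] at hT'
    obtain ⟨x, hx, rfl⟩ := Finset.mem_image.1 hT
    obtain ⟨y, hy, hyx⟩ := Finset.mem_image.1 hT'
    have := self_mem_orb σ x
    rw [← hyx, mem_singleton] at this
    rw [Finset.mem_compl] at hy
    exact hy (this ▸ hx)
  have hcard1 : (σ.support.image (orb σ)).card = σ.cycleType.card := by
    rw [h1, Equiv.Perm.cycleType_def, Multiset.card_map, ← Finset.card_def]
    apply Finset.card_image_of_injOn
    intro c₁ h₁ c₂ h₂ he
    obtain ⟨x, hx⟩ := (Equiv.Perm.mem_cycleFactorsFinset_iff.1 h₁).1.nonempty_support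
    rw [Equiv.Perm.cycle_is_cycleOf hx h₁, Equiv.Perm.cycle_is_cycleOf (he ▸ hx) h₂]
  have hcard2 : (σ.supportᶜ.image (orb σ)).card = (univ.filter fun x => σ x = x).card := by
    rw [h2]
    rw [Finset.card_image_of_injOn (fun x _ y _ h => Finset.singleton_injective h)]
    congr 1
    ext x
    simp [Equiv.Perm.mem_support]
  rw [himage, Finset.card_union_of_disjoint hdisj, numCycles, hcard1, hcard2]

lemma numCycles_le (σ : Equiv.Perm (Fin n)) : numCycles σ ≤ n := by
  rw [numCycles_eq]
  calc (univ.image (orb σ)).card ≤ (univ : Finset (Fin n)).card := Finset.card_image_le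
    _ = n := by simp

lemma numCycles_pos (σ : Equiv.Perm (Fin n)) (hn : 0 < n) : 0 < numCycles σ := by
  have : Nonempty (Fin n) := ⟨⟨0, hn⟩⟩
  rw [numCycles_eq]
  exact Finset.card_pos.2 (Finset.univ_nonempty.image _)

end Aux
noncomputable section Swap

variable {n : ℕ} {σ : Equiv.Perm (Fin n)} {a b : Fin n}

lemma swap_cycle_key (hab : ¬ σ.SameCycle a b) :
    (σ * Equiv.swap a b).SameCycle b a := by
  classical
  have hex : ∃ j, 0 < j ∧ (σ ^ j) a = a :=
    ⟨orderOf σ, orderOf_pos σ, by simp [pow_orderOf_eq_one]⟩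
  set i := Nat.find hex with hi
  obtain ⟨hipos, hia⟩ := Nat.find_spec hex
  have claim : ∀ j, 1 ≤ j → j ≤ i → ((σ * Equiv.swap a b) ^ j) b = (σ ^ j) a := by
    intro j
    induction j with
    | zero => intro h; omega
    | succ j ih =>
      intro _ hji
      rcases Nat.eq_zero_or_pos j with rfl | hj
      · simp [Equiv.Perm.mul_apply]
      · have hlt : j < i := by omega
        have h1 : (σ ^ j) a ≠ a := fun h => Nat.find_min hex hlt ⟨hj, h⟩
        have h2 : (σ ^ j) a ≠ b := fun h => hab ⟨(j : ℤ), by rw [zpow_natCast]; exact h⟩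
        rw [pow_succ', Equiv.Perm.mul_apply, ih (by omega) (by omega), pow_succ', Equiv.Perm.mul_apply,
          Equiv.Perm.mul_apply, Equiv.swap_apply_of_ne_of_ne h1 h2]
  exact ⟨(i : ℤ), by rw [zpow_natCast, claim i hipos le_rfl, hia]⟩

lemma sameCycle_swap_step (hab : ¬ σ.SameCycle a b) (x : Fin n) :
    (σ * Equiv.swap a b).SameCycle x (σ x) := by
  by_cases hxa : x = a
  · subst hxa
    have h1 : (σ * Equiv.swap x b).SameCycle b (σ x) :=
      ⟨1, by simp [Equiv.Perm.mul_apply]⟩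
    exact ((swap_cycle_key hab).symm).trans h1
  by_cases hxb : x = b
  · subst hxb
    have h1 : (σ * Equiv.swap a x).SameCycle a (σ x) :=
      ⟨1, by simp [Equiv.Perm.mul_apply]⟩
    exact (swap_cycle_key hab).trans h1
  · exact ⟨1, by simp [Equiv.Perm.mul_apply, Equiv.swap_apply_of_ne_of_ne hxa hxb]⟩

lemma sameCycle_of_sameCycle_swap (hab : ¬ σ.SameCycle a b) {x y : Fin n}
    (h : σ.SameCycle x y) : (σ * Equiv.swap a b).SameCycle x y := by
  obtain ⟨m, hmlt, rfl⟩ := h.exists_pow_eq'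
  clear hmlt h
  induction m with
  | zero => simpa using Equiv.Perm.SameCycle.refl (σ * Equiv.swap a b) x
  | succ m ih =>
    rw [pow_succ', Equiv.Perm.mul_apply]
    exact ih.trans (sameCycle_swap_step hab _)

/-- The merged relation. -/
private def Rrel (σ : Equiv.Perm (Fin n)) (a b x y : Fin n) : Prop :=
  σ.SameCycle x y ∨ (σ.SameCycle x a ∧ σ.SameCycle b y) ∨ (σ.SameCycle x b ∧ σ.SameCycle a y)

lemma sameCycle_mul_swap_iff (hab : ¬ σ.SameCycle a b) (x y : Fin n) :
    (σ * Equiv.swap a b).SameCycle x y ↔ Rrel σ a b x y := by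
  constructor
  · intro h
    obtain ⟨m, hmlt, rfl⟩ := h.exists_pow_eq'
    clear hmlt h
    induction m with
    | zero => exact Or.inl (Equiv.Perm.SameCycle.refl _ _)
    | succ m ih =>
      rw [pow_succ', Equiv.Perm.mul_apply]
      set z := ((σ * Equiv.swap a b) ^ m) x with hz
      have hstep : Rrel σ a b z ((σ * Equiv.swap a b) z) := by
        by_cases hza : z = a
        · refine Or.inr (Or.inl ⟨hza ▸ Equiv.Perm.SameCycle.refl _ _, ?_⟩)
          have : (σ * Equiv.swap a b) z = σ b := by simp [Equiv.Perm.mul_apply, hza]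
          rw [this]
          exact ⟨1, rfl⟩
        by_cases hzb : z = b
        · refine Or.inr (Or.inr ⟨hzb ▸ Equiv.Perm.SameCycle.refl _ _, ?_⟩)
          have : (σ * Equiv.swap a b) z = σ a := by simp [Equiv.Perm.mul_apply, hzb]
          rw [this]
          exact ⟨1, rfl⟩
        · have : (σ * Equiv.swap a b) z = σ z := by
            simp [Equiv.Perm.mul_apply, Equiv.swap_apply_of_ne_of_ne hza hzb]
          rw [this]
          exact Or.inl ⟨1, rfl⟩
      -- transitivity of Rrel
      rcases ih with h1 | ⟨h1, h2⟩ | ⟨h1, h2⟩ <;>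
        rcases hstep with g1 | ⟨g1, g2⟩ | ⟨g1, g2⟩
      · exact Or.inl (h1.trans g1)
      · exact Or.inr (Or.inl ⟨h1.trans g1, g2⟩)
      · exact Or.inr (Or.inr ⟨h1.trans g1, g2⟩)
      · exact Or.inr (Or.inl ⟨h1, h2.trans g1⟩)
      · exact absurd (h2.trans g1).symm hab
      · exact Or.inl (h1.trans g2)
      · exact Or.inr (Or.inr ⟨h1, h2.trans g1⟩)
      · exact Or.inl (h1.trans g2)
      · exact absurd (h2.trans g1) hab
  · rintro (h | ⟨h1, h2⟩ | ⟨h1, h2⟩)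
    · exact sameCycle_of_sameCycle_swap hab h
    · exact ((sameCycle_of_sameCycle_swap hab h1).trans
        (swap_cycle_key hab).symm).trans (sameCycle_of_sameCycle_swap hab h2)
    · exact ((sameCycle_of_sameCycle_swap hab h1).trans
        (swap_cycle_key hab)).trans (sameCycle_of_sameCycle_swap hab h2)

end Swap
noncomputable section Count

variable {n : ℕ} {σ : Equiv.Perm (Fin n)} {a b : Fin n}

lemma numCycles_mul_swap_merge (hab : ¬ σ.SameCycle a b) :
    numCycles (σ * Equiv.swap a b) + 1 = numCycles σ := by
  classical
  set A := orb σ a with hA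
  set B := orb σ b with hB
  set T : Finset (Fin n) :=
    univ.filter (fun x => ¬ σ.SameCycle a x ∧ ¬ σ.SameCycle b x) with hT
  set S := T.image (orb σ) with hS
  have hmemT : ∀ x, x ∈ T ↔ (¬ σ.SameCycle a x ∧ ¬ σ.SameCycle b x) := by
    intro x; simp [hT]
  have horb'a : ∀ x, σ.SameCycle a x → orb (σ * Equiv.swap a b) x = A ∪ B := by
    intro x hx
    ext y
    rw [mem_orb, sameCycle_mul_swap_iff hab, Finset.mem_union, mem_orb, mem_orb]
    constructor
    · rintro (h | ⟨h1, h2⟩ | ⟨h1, h2⟩)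
      · exact Or.inl (hx.trans h)
      · exact Or.inr h2
      · exact absurd (hx.trans h1) hab
    · rintro (h | h)
      · exact Or.inl (hx.symm.trans h)
      · exact Or.inr (Or.inl ⟨hx.symm, h⟩)
  have horb'b : ∀ x, σ.SameCycle b x → orb (σ * Equiv.swap a b) x = A ∪ B := by
    intro x hx
    ext y
    rw [mem_orb, sameCycle_mul_swap_iff hab, Finset.mem_union, mem_orb, mem_orb]
    constructor
    · rintro (h | ⟨h1, h2⟩ | ⟨h1, h2⟩)
      · exact Or.inr (hx.trans h)
      · exact absurd (hx.trans h1).symm hab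
      · exact Or.inl h2
    · rintro (h | h)
      · exact Or.inr (Or.inr ⟨hx.symm, h⟩)
      · exact Or.inl (hx.symm.trans h)
  have horb'T : ∀ x, x ∈ T → orb (σ * Equiv.swap a b) x = orb σ x := by
    intro x hx
    obtain ⟨hxa, hxb⟩ := (hmemT x).1 hx
    ext y
    rw [mem_orb, sameCycle_mul_swap_iff hab, mem_orb]
    constructor
    · rintro (h | ⟨h1, h2⟩ | ⟨h1, h2⟩)
      · exact h
      · exact absurd h1.symm hxa
      · exact absurd h1.symm hxb
    · exact fun h => Or.inl h
  have himg' : univ.image (orb (σ * Equiv.swap a b)) = insert (A ∪ B) S := by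
    ext U
    simp only [Finset.mem_image, Finset.mem_insert, Finset.mem_univ, true_and]
    constructor
    · rintro ⟨x, -, rfl⟩
      by_cases hxa : σ.SameCycle a x
      · exact Or.inl (horb'a x hxa)
      by_cases hxb : σ.SameCycle b x
      · exact Or.inl (horb'b x hxb)
      · refine Or.inr (Finset.mem_image.2 ⟨x, (hmemT x).2 ⟨hxa, hxb⟩, (horb'T x ((hmemT x).2 ⟨hxa, hxb⟩)).symm⟩)
    · rintro (rfl | hU)
      · exact ⟨a, horb'a a (Equiv.Perm.SameCycle.refl _ _)⟩
      · obtain ⟨x, hx, rfl⟩ := Finset.mem_image.1 hU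
        exact ⟨x, horb'T x hx⟩
  have horbA : ∀ x, σ.SameCycle a x → orb σ x = A := fun x hx => (orb_eq_of_sameCycle hx).symm
  have horbB : ∀ x, σ.SameCycle b x → orb σ x = B := fun x hx => (orb_eq_of_sameCycle hx).symm
  have himg : univ.image (orb σ) = insert A (insert B S) := by
    ext U
    simp only [Finset.mem_image, Finset.mem_insert, Finset.mem_univ, true_and]
    constructor
    · rintro ⟨x, -, rfl⟩
      by_cases hxa : σ.SameCycle a x
      · exact Or.inl (horbA x hxa)
      by_cases hxb : σ.SameCycle b x
      · exact Or.inr (Or.inl (horbB x hxb))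
      · exact Or.inr (Or.inr (Finset.mem_image.2 ⟨x, (hmemT x).2 ⟨hxa, hxb⟩, rfl⟩))
    · rintro (rfl | rfl | hU)
      · exact ⟨a, rfl⟩
      · exact ⟨b, rfl⟩
      · obtain ⟨x, hx, rfl⟩ := Finset.mem_image.1 hU
        exact ⟨x, rfl⟩
  have hnotS : ∀ x, x ∈ T → a ∉ orb σ x ∧ b ∉ orb σ x := by
    intro x hx
    obtain ⟨hxa, hxb⟩ := (hmemT x).1 hx
    exact ⟨fun h => hxa (mem_orb.1 h).symm, fun h => hxb (mem_orb.1 h).symm⟩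
  have hABS : (A ∪ B) ∉ S := by
    intro h
    obtain ⟨x, hx, hxe⟩ := Finset.mem_image.1 h
    have : a ∈ orb σ x := by
      rw [hxe]; exact Finset.mem_union_left _ (self_mem_orb σ a)
    exact (hnotS x hx).1 this
  have hAB : A ≠ B := by
    intro h
    apply hab
    have : b ∈ A := h ▸ self_mem_orb σ b
    exact mem_orb.1 this
  have hAS : A ∉ S := by
    intro h
    obtain ⟨x, hx, hxe⟩ := Finset.mem_image.1 h
    exact (hnotS x hx).1 (hxe ▸ self_mem_orb σ a)
  have hBS : B ∉ S := by
    intro h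
    obtain ⟨x, hx, hxe⟩ := Finset.mem_image.1 h
    exact (hnotS x hx).2 (hxe ▸ self_mem_orb σ b)
  rw [numCycles_eq, numCycles_eq, himg', himg,
    Finset.card_insert_of_notMem hABS,
    Finset.card_insert_of_notMem (by
      simp only [Finset.mem_insert]
      rintro (h | h)
      · exact hAB h
      · exact hAS h),
    Finset.card_insert_of_notMem hBS]

lemma numCycles_mul_swap_split (hne : a ≠ b) (h : σ b = a) :
    numCycles (σ * Equiv.swap a b) = numCycles σ + 1 := by
  have h1 : (σ * Equiv.swap a b) a = a := by
    rw [Equiv.Perm.mul_apply, Equiv.swap_apply_left, h]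
  have h2 : ¬ (σ * Equiv.swap a b).SameCycle a b := by
    rintro ⟨i, hi⟩
    rw [Equiv.Perm.zpow_apply_eq_self_of_apply_eq_self h1] at hi
    exact hne hi
  have h3 := numCycles_mul_swap_merge h2
  rw [mul_assoc, Equiv.swap_mul_self, mul_one] at h3
  omega

end Count
noncomputable section Gamma

/-- `permCongr` along an equiv, as a monoid hom. -/
def pcHom {α β : Type*} (e : α ≃ β) : Equiv.Perm α →* Equiv.Perm β where
  toFun := e.permCongr
  map_one' := by ext x; simp
  map_mul' f g := by ext x; simp [Equiv.Perm.mul_apply]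

@[simp] lemma pcHom_apply {α β : Type*} (e : α ≃ β) (f : Equiv.Perm α) (x : α) :
    pcHom e f (e x) = e (f x) := by
  simp [pcHom]

lemma gammaPQ_eq (p q : ℕ) :
    gammaPQ p q = pcHom finSumFinEquiv
      (Equiv.Perm.sumCongrHom (Fin p) (Fin q) (finRotate p, finRotate q)) := rfl

lemma gammaPQ_zpow (p q : ℕ) (m : ℤ) :
    (gammaPQ p q) ^ m = pcHom finSumFinEquiv
      (Equiv.Perm.sumCongrHom (Fin p) (Fin q) (finRotate p ^ m, finRotate q ^ m)) := by
  rw [gammaPQ_eq, ← map_zpow, ← map_zpow]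
  rfl

open Fin.CommRing in
lemma finRotate_pow (r m : ℕ) (x : Fin (r + 1)) :
    ((finRotate (r + 1)) ^ m) x = x + (m : Fin (r + 1)) := by
  induction m with
  | zero => simp
  | succ m ih =>
    rw [pow_succ', Equiv.Perm.mul_apply, ih, finRotate_succ_apply]
    push_cast
    ring

open Fin.CommRing in
lemma finRotate_trans {r : ℕ} (a c : Fin r) :
    ∃ m : ℕ, ((finRotate r) ^ m) a = c := by
  obtain ⟨s, rfl⟩ : ∃ s, r = s + 1 := ⟨r - 1, by have := a.pos; omega⟩
  refine ⟨(c - a).val, ?_⟩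
  rw [finRotate_pow, Fin.cast_val_eq_self]
  ring

lemma fin_block_left {p q : ℕ} (x : Fin (p + q)) (h : (x : ℕ) < p) :
    ∃ a : Fin p, x = finSumFinEquiv (Sum.inl a) := by
  rcases hu : finSumFinEquiv.symm x with a | c
  · exact ⟨a, by rw [← hu, Equiv.apply_symm_apply]⟩
  · have hx : x = finSumFinEquiv (Sum.inr c) := by rw [← hu, Equiv.apply_symm_apply]
    rw [hx, finSumFinEquiv_apply_right] at h
    simp at h

lemma fin_block_right {p q : ℕ} (x : Fin (p + q)) (h : ¬ (x : ℕ) < p) :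
    ∃ c : Fin q, x = finSumFinEquiv (Sum.inr c) := by
  rcases hu : finSumFinEquiv.symm x with a | c
  · have hx : x = finSumFinEquiv (Sum.inl a) := by rw [← hu, Equiv.apply_symm_apply]
    rw [hx, finSumFinEquiv_apply_left] at h
    exact absurd (by simp) h
  · exact ⟨c, by rw [← hu, Equiv.apply_symm_apply]⟩

lemma gammaPQ_sameCycle_iff (p q : ℕ) (i j : Fin (p + q)) :
    (gammaPQ p q).SameCycle i j ↔ ((i : ℕ) < p ↔ (j : ℕ) < p) := by
  constructor
  · rintro ⟨m, rfl⟩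
    rw [gammaPQ_zpow]
    by_cases hip : (i : ℕ) < p
    · obtain ⟨a, rfl⟩ := fin_block_left i hip
      rw [pcHom_apply]
      simp [finSumFinEquiv_apply_left, Fin.is_lt]
    · obtain ⟨c, rfl⟩ := fin_block_right i hip
      rw [pcHom_apply]
      simp [finSumFinEquiv_apply_right]
  · intro hij
    by_cases hip : (i : ℕ) < p
    · obtain ⟨a, rfl⟩ := fin_block_left i hip
      obtain ⟨d, rfl⟩ := fin_block_left j (hij.1 hip)
      obtain ⟨m, hm⟩ := finRotate_trans a d
      refine ⟨(m : ℤ), ?_⟩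
      rw [gammaPQ_zpow, pcHom_apply]
      congr 1
      simp [Equiv.Perm.sumCongrHom_apply, zpow_natCast, hm]
    · obtain ⟨c, rfl⟩ := fin_block_right i hip
      obtain ⟨e, rfl⟩ := fin_block_right j (fun h => hip (hij.2 h))
      obtain ⟨m, hm⟩ := finRotate_trans c e
      refine ⟨(m : ℤ), ?_⟩
      rw [gammaPQ_zpow, pcHom_apply]
      congr 1
      simp [Equiv.Perm.sumCongrHom_apply, zpow_natCast, hm]

lemma numCycles_gammaPQ {p q : ℕ} (hp : 0 < p) (hq : 0 < q) :
    numCycles (gammaPQ p q) = 2 := by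
  classical
  set A : Finset (Fin (p + q)) := univ.filter (fun y => (y : ℕ) < p) with hA
  set B : Finset (Fin (p + q)) := univ.filter (fun y => ¬ (y : ℕ) < p) with hB
  have horb : ∀ x : Fin (p + q), orb (gammaPQ p q) x = if (x : ℕ) < p then A else B := by
    intro x
    ext y
    rw [mem_orb, gammaPQ_sameCycle_iff]
    by_cases hx : (x : ℕ) < p <;> simp [hx, hA, hB]
  have x0 : Fin (p + q) := ⟨0, by omega⟩
  have himg : univ.image (orb (gammaPQ p q)) = {A, B} := by
    ext U
    simp only [Finset.mem_image, Finset.mem_insert, Finset.mem_singleton, Finset.mem_univ,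
      true_and]
    constructor
    · rintro ⟨x, rfl⟩
      rw [horb x]
      by_cases hx : (x : ℕ) < p <;> simp [hx]
    · rintro (rfl | rfl)
      · exact ⟨⟨0, by omega⟩, by rw [horb]; simp [hp]⟩
      · exact ⟨⟨p, by omega⟩, by rw [horb]; simp⟩
  rw [numCycles_eq, himg]
  rw [Finset.card_insert_of_notMem, Finset.card_singleton]
  simp only [Finset.mem_singleton]
  intro h
  have h0 : (⟨0, by omega⟩ : Fin (p + q)) ∈ A := by simp [hA, hp]
  rw [h, hB] at h0
  simp at h0
  omega

end Gamma
theorem stmt1 {p q : ℕ} (π : Equiv.Perm (Fin (p + q))) (k : Fin (p + q))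
    (hlen : plen π + plen (π⁻¹ * gammaPQ p q) = plen (gammaPQ p q) + 2)
    (hk : ¬ (gammaPQ p q).SameCycle k (π k)) :
    numCycles (gammaPQ p q * Equiv.swap k ((gammaPQ p q)⁻¹ (π k))) = 1 ∧
      plen π + plen (π⁻¹ * (gammaPQ p q * Equiv.swap k ((gammaPQ p q)⁻¹ (π k)))) =
        plen (gammaPQ p q * Equiv.swap k ((gammaPQ p q)⁻¹ (π k))) := by
  classical
  set γ := gammaPQ p q with hγ
  set b := γ⁻¹ (π k) with hbdef
  -- p and q are positive
  have hk' : ¬ (((k : ℕ) < p) ↔ (((π k) : ℕ) < p)) := by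
    rw [← gammaPQ_sameCycle_iff p q k (π k)]; exact hk
  have hp : 0 < p := by
    rcases Nat.eq_zero_or_pos p with h | h
    · exact absurd (by omega : (((k : ℕ) < p) ↔ (((π k) : ℕ) < p))) hk'
    · exact h
  have hq : 0 < q := by
    rcases Nat.eq_zero_or_pos q with h | h
    · have h1 : (k : ℕ) < p := by have := k.is_lt; omega
      have h2 : ((π k : Fin (p + q)) : ℕ) < p := by have := (π k).is_lt; omega
      exact absurd (by omega : (((k : ℕ) < p) ↔ (((π k) : ℕ) < p))) hk'
    · exact h
  -- k and b are in different cycles of γ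
  have hbc : γ.SameCycle b (π k) := ⟨1, by simp [hbdef]⟩
  have hkb : ¬ γ.SameCycle k b := fun h => hk (h.trans hbc)
  have hkneb : k ≠ b := fun h => hkb (h ▸ Equiv.Perm.SameCycle.refl _ _)
  -- merge
  have hγ2 : numCycles γ = 2 := numCycles_gammaPQ hp hq
  have hmerge : numCycles (γ * Equiv.swap k b) + 1 = numCycles γ :=
    numCycles_mul_swap_merge hkb
  have hone : numCycles (γ * Equiv.swap k b) = 1 := by omega
  refine ⟨hone, ?_⟩
  -- split for π⁻¹ * γ
  have hσb : (π⁻¹ * γ) b = k := by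
    simp [Equiv.Perm.mul_apply, hbdef]
  have hsplit : numCycles ((π⁻¹ * γ) * Equiv.swap k b) = numCycles (π⁻¹ * γ) + 1 :=
    numCycles_mul_swap_split hkneb hσb
  have hassoc : π⁻¹ * (γ * Equiv.swap k b) = (π⁻¹ * γ) * Equiv.swap k b := by
    rw [mul_assoc]
  -- arithmetic
  have hb1 : numCycles π ≤ p + q := numCycles_le π
  have hb2 : numCycles (π⁻¹ * γ) ≤ p + q := numCycles_le _
  have hb3 : 0 < numCycles π := numCycles_pos π (by omega)
  have hb4 : 0 < numCycles (π⁻¹ * γ) := numCycles_pos _ (by omega)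
  rw [hassoc]
  unfold plen at hlen ⊢
  rw [hγ2] at hlen
  rw [hsplit, hone]
  omega
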